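/- The essential image of φ : Glid FR → Prefrag FR is closed under subobjects: if M is an object of Glid FR and f : N → φ(M) is a monomorphism in Prefrag FR, then N lies in the essential image of φ. -/

import Mathlib

set_option linter.unusedSectionVars false
set_option maxHeartbeats 1000000
set_option synthInstance.maxHeartbeats 1000000
set_option maxHeartbeats 2000000

noncomputable section

open CategoryTheory CategoryTheory.Limits

universe u

namespace GliderPaper

/-- A `Γ`-filtration `FR` on a unital ring `R`: additive subgroups `F γ` with
`1 ∈ F 1`, monotone in `γ`, and multiplicative. -/
structure RingFiltration (Γ : Type u) [Group Γ] [PartialOrder Γ] (R : Type u) [Ring R] where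
  F : Γ → AddSubgroup R
  one_mem : (1 : R) ∈ F 1
  mono : ∀ {α β : Γ}, α ≤ β → F α ≤ F β
  mul_mem : ∀ {α β : Γ} {a b : R}, a ∈ F α → b ∈ F β → a * b ∈ F (α * β)

variable {Γ : Type u} [Group Γ] [PartialOrder Γ]
  [CovariantClass Γ Γ (· * ·) (· ≤ ·)] [CovariantClass Γ Γ (Function.swap (· * ·)) (· ≤ ·)]
  {R : Type u} [Ring R]

/-- Objects of the extended filtered companion category `oFF_Λ R`:
the disjoint union `Λ ⊔ {∞}`. -/
inductive OFF (FR : RingFiltration Γ R) (Λ : Set Γ) : Type u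
  | of (α : Λ)
  | infty

/-- Objects of the filtered companion category `FF_Λ R`: the set `Λ`. -/
inductive FF (FR : RingFiltration Γ R) (Λ : Set Γ) : Type u
  | of (α : Λ)

variable (FR : RingFiltration Γ R) (Λ : Set Γ)

namespace OFF

/-- `le X Y` holds iff the canonical morphism `1_{X,Y}` is defined, i.e. `X ≤ Y` in `Λ`,
or `Y = ∞`. -/
def le : OFF FR Λ → OFF FR Λ → Prop
  | of α, of β => (α : Γ) ≤ (β : Γ)
  | _, infty => True
  | infty, of _ => False

open scoped Classical in
/-- The additive subgroup of `R` of morphisms `X ⟶ Y` in `oFF_Λ R`: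
`Hom(α,β) = F_{βα⁻¹}R` for `α ≤ β` in `Λ`, `Hom(X,∞) = R`, and `0` otherwise. -/
noncomputable def homGrp : OFF FR Λ → OFF FR Λ → AddSubgroup R
  | of α, of β => if (α : Γ) ≤ (β : Γ) then FR.F ((β : Γ) * (α : Γ)⁻¹) else ⊥
  | _, infty => ⊤
  | infty, of _ => ⊥

theorem le_refl' : ∀ X : OFF FR Λ, le FR Λ X X
  | of _ => _root_.le_refl _
  | infty => trivial

theorem one_mem_homGrp : ∀ {X Y : OFF FR Λ}, le FR Λ X Y → (1 : R) ∈ homGrp FR Λ X Y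
  | of α, of β, h => by
      have h' : (α : Γ) ≤ (β : Γ) := h
      have h1 : (1 : Γ) ≤ (β : Γ) * (α : Γ)⁻¹ := by
        rw [← mul_inv_cancel (α : Γ)]
        exact mul_le_mul_left h' _
      simpa [homGrp, if_pos h'] using FR.mono h1 FR.one_mem
  | of _, infty, _ => trivial
  | infty, infty, _ => trivial
  | infty, of _, h => h.elim

theorem mul_mem_homGrp : ∀ {X Y Z : OFF FR Λ} {f g : R},
    f ∈ homGrp FR Λ X Y → g ∈ homGrp FR Λ Y Z → g * f ∈ homGrp FR Λ X Z := by
  intro X Y Z f g hf hg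
  cases X <;> cases Y <;> cases Z <;> simp only [homGrp] at hf hg ⊢ <;> try trivial
  case of.of.of a b c =>
    by_cases hab : (a : Γ) ≤ (b : Γ)
    · by_cases hbc : (b : Γ) ≤ (c : Γ)
      · rw [if_pos hab] at hf
        rw [if_pos hbc] at hg
        rw [if_pos (le_trans hab hbc)]
        have := FR.mul_mem hg hf
        rwa [show (c : Γ) * (b : Γ)⁻¹ * ((b : Γ) * (a : Γ)⁻¹) = (c : Γ) * (a : Γ)⁻¹ by
          group] at this
      · rw [if_neg hbc] at hg
        rw [AddSubgroup.mem_bot] at hg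
        subst hg
        simp only [zero_mul]
        exact AddSubgroup.zero_mem _
    · rw [if_neg hab] at hf
      rw [AddSubgroup.mem_bot] at hf
      subst hf
      simp only [mul_zero]
      exact AddSubgroup.zero_mem _
  case of.infty.of a c =>
    rw [AddSubgroup.mem_bot] at hg
    subst hg
    simp only [zero_mul]
    exact AddSubgroup.zero_mem _
  case infty.of.of b c =>
    rw [AddSubgroup.mem_bot] at hf
    subst hf
    simp only [mul_zero]
    exact AddSubgroup.zero_mem _
  case infty.infty.of c =>
    rw [AddSubgroup.mem_bot] at hg
    subst hg
    simp only [zero_mul]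
    exact AddSubgroup.zero_mem _

instance : Category (OFF FR Λ) where
  Hom X Y := homGrp FR Λ X Y
  id X := ⟨1, one_mem_homGrp FR Λ (le_refl' FR Λ X)⟩
  comp f g := ⟨g.1 * f.1, mul_mem_homGrp FR Λ f.2 g.2⟩
  id_comp f := Subtype.ext (mul_one f.1)
  comp_id f := Subtype.ext (one_mul f.1)
  assoc f g h := Subtype.ext (mul_assoc h.1 g.1 f.1).symm

instance : Preadditive (OFF FR Λ) where
  homGroup X Y := inferInstanceAs (AddCommGroup (homGrp FR Λ X Y))
  add_comp _ _ _ f f' g := Subtype.ext (mul_add g.1 f.1 f'.1)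
  comp_add _ _ _ f g g' := Subtype.ext (add_mul g.1 g'.1 f.1)

end OFF

namespace FF

/-- The inclusion of the objects of `FF_Λ R` into those of `oFF_Λ R`. -/
def toOFF : FF FR Λ → OFF FR Λ
  | of α => .of α

instance : Category (FF FR Λ) where
  Hom X Y := OFF.homGrp FR Λ (toOFF FR Λ X) (toOFF FR Λ Y)
  id X := ⟨1, OFF.one_mem_homGrp FR Λ (OFF.le_refl' FR Λ _)⟩
  comp f g := ⟨g.1 * f.1, OFF.mul_mem_homGrp FR Λ f.2 g.2⟩
  id_comp f := Subtype.ext (mul_one f.1)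
  comp_id f := Subtype.ext (one_mul f.1)
  assoc f g h := Subtype.ext (mul_assoc h.1 g.1 f.1).symm

instance : Preadditive (FF FR Λ) where
  homGroup X Y := inferInstanceAs (AddCommGroup (OFF.homGrp FR Λ (toOFF FR Λ X) (toOFF FR Λ Y)))
  add_comp _ _ _ f f' g := Subtype.ext (mul_add g.1 f.1 f'.1)
  comp_add _ _ _ f g g' := Subtype.ext (add_mul g.1 g'.1 f.1)

end FF

/-- The inclusion functor `j : FF_Λ R ⥤ oFF_Λ R`. -/
def jF : FF FR Λ ⥤ OFF FR Λ where
  obj := FF.toOFF FR Λ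
  map f := f
  map_id _ := rfl
  map_comp _ _ := rfl

instance : (jF FR Λ).Additive := ⟨rfl⟩

/-- `Mod C`: the category of additive functors from `C` to abelian groups. -/
abbrev Mod (C : Type u) [Category.{u} C] [Preadditive C] : Type (u + 1) :=
  C ⥤+ AddCommGrpCat.{u}

/-- The component at `X` of a morphism in `Mod C`. -/
def mapp {C : Type u} [Category.{u} C] [Preadditive C] {M N : Mod C} (f : M ⟶ N) (X : C) :
    M.obj.obj X ⟶ N.obj.obj X :=
  f.hom.app X

/-- The canonical morphism `1_{X,Y}` in `oFF_Λ R`, given by `1_R`. -/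
def unitHom (X Y : OFF FR Λ) (h : OFF.le FR Λ X Y) : X ⟶ Y :=
  ⟨1, OFF.one_mem_homGrp FR Λ h⟩

/-- The canonical morphism `1_{α,β}` in `FF_Λ R`, given by `1_R`. -/
def unitHomFF (α β : Λ) (h : (α : Γ) ≤ (β : Γ)) : (FF.of α : FF FR Λ) ⟶ FF.of β :=
  unitHom FR Λ (.of α) (.of β) h

/-- A module `M` over `oFF_Λ R` is a preglider if all the maps `M(1_{X,Y})` are injective. -/
def IsPreglider (M : Mod (OFF FR Λ)) : Prop :=
  ∀ (X Y : OFF FR Λ) (h : OFF.le FR Λ X Y), Function.Injective (M.obj.map (unitHom FR Λ X Y h))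

/-- A module `M` over `FF_Λ R` is a prefragment if all the maps `M(1_{α,β})` are injective. -/
def IsPrefragment (M : Mod (FF FR Λ)) : Prop :=
  ∀ (α β : Λ) (h : (α : Γ) ≤ (β : Γ)), Function.Injective (M.obj.map (unitHomFF FR Λ α β h))

/-- The category of pregliders: the full subcategory of `Mod (oFF_Λ R)` of pregliders. -/
abbrev Preglid : Type (u + 1) :=
  ObjectProperty.FullSubcategory (fun M : Mod (OFF FR Λ) => IsPreglider FR Λ M)

instance : Preadditive (Preglid FR Λ) := Preadditive.fullSubcategory _

/-- The category of prefragments: the full subcategory of `Mod (FF_Λ R)` of prefragments. -/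
abbrev Prefrag : Type (u + 1) :=
  ObjectProperty.FullSubcategory (fun M : Mod (FF FR Λ) => IsPrefragment FR Λ M)

instance : Preadditive (Prefrag FR Λ) := Preadditive.fullSubcategory _

/-- The inclusion `Preglid FR Λ ⥤ Mod (oFF_Λ R)`. -/
def iotaF : Preglid FR Λ ⥤ Mod (OFF FR Λ) := ObjectProperty.ι _

/-- The inclusion `Prefrag FR Λ ⥤ Mod (FF_Λ R)`. -/
def etaF : Prefrag FR Λ ⥤ Mod (FF FR Λ) := ObjectProperty.ι _

/-- The component at `X` of a morphism of pregliders. -/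
def pgapp {M N : Preglid FR Λ} (f : M ⟶ N) (X : OFF FR Λ) :
    M.obj.obj.obj X ⟶ N.obj.obj.obj X :=
  mapp f.hom X

/-- The component at `X` of a morphism of prefragments. -/
def pfapp {M N : Prefrag FR Λ} (f : M ⟶ N) (X : FF FR Λ) :
    M.obj.obj.obj X ⟶ N.obj.obj.obj X :=
  mapp f.hom X

/-- The class `Σ` of morphisms of pregliders all of whose components at objects of `Λ`
are isomorphisms. -/
def SigmaClass : MorphismProperty (Preglid FR Λ) :=
  fun _ _ f => ∀ α : Λ, IsIso (pgapp FR Λ f (.of α))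

/-- The category of glider representations: the localization of `Preglid FR Λ` at `Σ`. -/
abbrev Glid : Type (u + 1) := (SigmaClass FR Λ).Localization

/-- The localization functor `Q : Preglid FR Λ ⥤ Glid FR Λ`. -/
def QF : Preglid FR Λ ⥤ Glid FR Λ := (SigmaClass FR Λ).Q

/-- The restriction functor `j^* : Mod (oFF_Λ R) ⥤ Mod (FF_Λ R)`. -/
def jStar : Mod (OFF FR Λ) ⥤ Mod (FF FR Λ) where
  obj M := ⟨jF FR Λ ⋙ M.obj, by haveI : M.obj.Additive := M.property; exact (inferInstance : (jF FR Λ ⋙ M.obj).Additive)⟩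
  map {M N} f := ObjectProperty.homMk (Functor.whiskerLeft (jF FR Λ) f.hom)
  map_id _ := rfl
  map_comp _ _ := rfl

theorem isPrefragment_jStar (M : Mod (OFF FR Λ)) (hM : IsPreglider FR Λ M) :
    IsPrefragment FR Λ ((jStar FR Λ).obj M) :=
  fun α β h => hM (.of α) (.of β) h

/-- The restriction functor `j^* : Preglid FR Λ ⥤ Prefrag FR Λ`. -/
def jRes : Preglid FR Λ ⥤ Prefrag FR Λ where
  obj M := ⟨(jStar FR Λ).obj M.obj, isPrefragment_jStar FR Λ M.obj M.property⟩
  map f := ObjectProperty.homMk ((jStar FR Λ).map f.hom)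
  map_id M := by ext1; exact ((jStar FR Λ).map_id M.obj)
  map_comp f g := by ext1; exact ((jStar FR Λ).map_comp f.hom g.hom)

theorem sigma_isInvertedBy : (SigmaClass FR Λ).IsInvertedBy (jRes FR Λ) := by
  intro M N f hf
  haveI : (AdditiveFunctor.forget (FF FR Λ) AddCommGrpCat.{u}).Faithful :=
    ObjectProperty.faithful_ι _
  haveI : ∀ X : FF FR Λ, IsIso
      (((ObjectProperty.ι (fun M : Mod (FF FR Λ) => IsPrefragment FR Λ M) ⋙
        AdditiveFunctor.forget _ _).map ((jRes FR Λ).map f)).app X) := by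
    rintro ⟨α⟩
    exact hf α
  haveI : IsIso ((ObjectProperty.ι (fun M : Mod (FF FR Λ) => IsPrefragment FR Λ M) ⋙
      AdditiveFunctor.forget _ _).map ((jRes FR Λ).map f)) :=
    NatIso.isIso_of_isIso_app _
  exact isIso_of_reflects_iso ((jRes FR Λ).map f)
    (ObjectProperty.ι (fun M : Mod (FF FR Λ) => IsPrefragment FR Λ M) ⋙
      AdditiveFunctor.forget _ _)

/-- The canonical fully faithful functor `φ : Glid FR Λ ⥤ Prefrag FR Λ`,
the unique functor with `Q ⋙ φ = j^*`. -/
def phiF : Glid FR Λ ⥤ Prefrag FR Λ :=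
  Localization.Construction.lift (jRes FR Λ) (sigma_isInvertedBy FR Λ)

theorem phiF_fac : QF FR Λ ⋙ phiF FR Λ = jRes FR Λ :=
  Localization.Construction.fac _ _


section Statements

variable {Γ : Type u} [Group Γ] [PartialOrder Γ]
  [CovariantClass Γ Γ (· * ·) (· ≤ ·)] [CovariantClass Γ Γ (Function.swap (· * ·)) (· ≤ ·)]
  {R : Type u} [Ring R]

section Aux

variable (FR : RingFiltration Γ R) (Λ : Set Γ)

/-- The kernel functor of a natural transformation between additive functors on `FF`. -/
def kerFunctor (A B : FF FR Λ ⥤ AddCommGrpCat.{u}) [A.Additive] (τ : A ⟶ B) :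
    FF FR Λ ⥤ AddCommGrpCat.{u} where
  obj X := AddCommGrpCat.of (AddMonoidHom.ker (τ.app X).hom)
  map {X Y} g := AddCommGrpCat.ofHom (AddMonoidHom.codRestrict
    ((A.map g).hom.comp (AddMonoidHom.ker (τ.app X).hom).subtype) (AddMonoidHom.ker (τ.app Y).hom)
    (fun x => by
      have h1 := congrArg (fun (k : A.obj X ⟶ B.obj Y) => k.hom x.1) (τ.naturality g)
      have h2 : (τ.app X).hom x.1 = 0 := x.2
      have h1' : (τ.app Y).hom ((A.map g).hom x.1) = (B.map g).hom ((τ.app X).hom x.1) := h1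
      show (τ.app Y).hom ((A.map g).hom x.1) = 0
      rw [h1', h2, map_zero]))
  map_id X := by
    refine AddCommGrpCat.ext fun x => Subtype.ext ?_
    show (A.map (𝟙 X)).hom x.1 = x.1
    rw [CategoryTheory.Functor.map_id]; rfl
  map_comp {X Y Z} g h := by
    refine AddCommGrpCat.ext fun x => Subtype.ext ?_
    show (A.map (g ≫ h)).hom x.1 = (A.map h).hom ((A.map g).hom x.1)
    rw [CategoryTheory.Functor.map_comp]; rfl

instance kerFunctor_additive (A B : FF FR Λ ⥤ AddCommGrpCat.{u}) [A.Additive] (τ : A ⟶ B) :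
    (kerFunctor FR Λ A B τ).Additive where
  map_add {X Y g g'} := by
    refine AddCommGrpCat.ext fun x => Subtype.ext ?_
    show (A.map (g + g')).hom x.1 = (A.map g).hom x.1 + (A.map g').hom x.1
    rw [Functor.map_add]; rfl

/-- A monomorphism of prefragments is componentwise injective. -/
theorem prefrag_mono_injective {A B : Prefrag FR Λ} (f : A ⟶ B) (hf : Mono f) (X : FF FR Λ) :
    Function.Injective (pfapp FR Λ f X) := by
  haveI hAadd := A.obj.property
  let τ : A.obj.obj ⟶ B.obj.obj := f.hom.hom
  let K : Mod (FF FR Λ) := ⟨kerFunctor FR Λ A.obj.obj B.obj.obj τ,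
    (inferInstance : (kerFunctor FR Λ A.obj.obj B.obj.obj τ).Additive)⟩
  have hK : IsPrefragment FR Λ K := by
    intro α β h
    intro x y hxy
    refine Subtype.ext ?_
    exact A.property α β h (congrArg Subtype.val hxy)
  let KP : Prefrag FR Λ := ⟨K, hK⟩
  let ι : KP ⟶ A := ObjectProperty.homMk (ObjectProperty.homMk
    ({ app := fun Y => AddCommGrpCat.ofHom (AddMonoidHom.ker (τ.app Y).hom).subtype
       naturality := fun Y Z g => AddCommGrpCat.ext fun x => rfl } :
      (kerFunctor FR Λ A.obj.obj B.obj.obj τ) ⟶ A.obj.obj))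
  have hcomp : ι ≫ f = (0 : KP ⟶ A) ≫ f := by
    have h1 : ι ≫ f = 0 := by
      refine ObjectProperty.hom_ext _ (ObjectProperty.hom_ext _
        (NatTrans.ext (funext fun Y => AddCommGrpCat.ext fun x => ?_)))
      exact x.2
    rw [h1, zero_comp]
  haveI := hf
  have hι : ι = 0 := (cancel_mono f).mp hcomp
  intro a b hab
  have hsub : pfapp FR Λ f X (a - b) = 0 := by
    rw [map_sub, hab, sub_self]
  have hx : a - b ∈ AddMonoidHom.ker (τ.app X).hom := hsub
  have := congrArg (fun (k : KP ⟶ A) => pfapp FR Λ k X ⟨a - b, hx⟩) hι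
  have hz : a - b = 0 := this
  rw [sub_eq_zero] at hz
  exact hz

section Ext

variable (Mo : OFF FR Λ ⥤ AddCommGrpCat.{u}) (Mn : FF FR Λ ⥤ AddCommGrpCat.{u})
  (τ : Mn ⟶ jF FR Λ ⋙ Mo)

/-- Objects of the extension of a prefragment along `τ`. -/
def extObj : OFF FR Λ → AddCommGrpCat.{u}
  | .of α => Mn.obj (.of α)
  | .infty => Mo.obj .infty

/-- Maps of the extension of a prefragment along `τ`. -/
def extMap : ∀ {X Y : OFF FR Λ}, (X ⟶ Y) →
    (extObj FR Λ Mo Mn X ⟶ extObj FR Λ Mo Mn Y)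
  | .of α, .of β, g => Mn.map (show (FF.of α : FF FR Λ) ⟶ .of β from g)
  | .of α, .infty, g =>
      τ.app (.of α) ≫ Mo.map (show (OFF.of α : OFF FR Λ) ⟶ .infty from g)
  | .infty, .of _, _ => 0
  | .infty, .infty, g => Mo.map g

variable [Mo.Additive] [Mn.Additive]

/-- The extension of a prefragment along `τ`, as a functor on `OFF`. -/
def extFunctor : OFF FR Λ ⥤ AddCommGrpCat.{u} where
  obj := extObj FR Λ Mo Mn
  map := extMap FR Λ Mo Mn τ
  map_id X := by
    cases X with
    | of α => exact Mn.map_id (.of α)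
    | infty => exact Mo.map_id .infty
  map_comp {X Y Z} g h := by
    cases X with
    | of α =>
      cases Y with
      | of β =>
        cases Z with
        | of γ => exact Mn.map_comp g h
        | infty =>
          have nat : Mn.map (show (FF.of α : FF FR Λ) ⟶ .of β from g) ≫ τ.app (.of β) =
              τ.app (.of α) ≫ Mo.map g :=
            τ.naturality (show (FF.of α : FF FR Λ) ⟶ .of β from g)
          show τ.app (.of α) ≫ Mo.map (g ≫ h) =
            Mn.map (show (FF.of α : FF FR Λ) ⟶ .of β from g) ≫ (τ.app (.of β) ≫ Mo.map h)
          erw [Functor.map_comp, ← Category.assoc, ← nat, Category.assoc]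
      | infty =>
        cases Z with
        | of γ =>
          have hz : h = 0 := Subtype.ext (AddSubgroup.mem_bot.mp h.2)
          rw [hz, comp_zero]
          show extMap FR Λ Mo Mn τ (0 : OFF.of α ⟶ OFF.of γ) =
            extMap FR Λ Mo Mn τ g ≫ (0 : extObj FR Λ Mo Mn .infty ⟶ extObj FR Λ Mo Mn (.of γ))
          rw [comp_zero]
          exact Functor.map_zero Mn (.of α) (.of γ)
        | infty =>
          show τ.app (.of α) ≫ Mo.map (g ≫ h) = (τ.app (.of α) ≫ Mo.map g) ≫ Mo.map h
          erw [Functor.map_comp, Category.assoc]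
    | infty =>
      cases Y with
      | of β =>
        cases Z with
        | of γ =>
          show (0 : extObj FR Λ Mo Mn .infty ⟶ extObj FR Λ Mo Mn (.of γ)) =
            (0 : extObj FR Λ Mo Mn .infty ⟶ extObj FR Λ Mo Mn (.of β)) ≫
              Mn.map (show (FF.of β : FF FR Λ) ⟶ .of γ from h)
          erw [zero_comp]; rfl
        | infty =>
          have hg : g = 0 := Subtype.ext (AddSubgroup.mem_bot.mp g.2)
          rw [hg, zero_comp]
          show Mo.map (0 : OFF.infty ⟶ OFF.infty) =
            (0 : extObj FR Λ Mo Mn .infty ⟶ extObj FR Λ Mo Mn (.of β)) ≫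
              (τ.app (.of β) ≫ Mo.map h)
          rw [zero_comp]
          exact Functor.map_zero Mo .infty .infty
      | infty =>
        cases Z with
        | of γ =>
          show (0 : extObj FR Λ Mo Mn .infty ⟶ extObj FR Λ Mo Mn (.of γ)) =
            Mo.map g ≫ (0 : extObj FR Λ Mo Mn .infty ⟶ extObj FR Λ Mo Mn (.of γ))
          erw [comp_zero]; rfl
        | infty => exact Mo.map_comp g h

instance extFunctor_additive : (extFunctor FR Λ Mo Mn τ).Additive where
  map_add {X Y g g'} := by
    cases X with
    | of α =>
      cases Y with
      | of β => exact Mn.map_add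
      | infty =>
        show τ.app (.of α) ≫ Mo.map (g + g') =
          τ.app (.of α) ≫ Mo.map g + τ.app (.of α) ≫ Mo.map g'
        erw [Functor.map_add, Preadditive.comp_add]
    | infty =>
      cases Y with
      | of β =>
        show (0 : extObj FR Λ Mo Mn .infty ⟶ extObj FR Λ Mo Mn (.of β)) = 0 + 0
        rw [add_zero]
      | infty => exact Mo.map_add

/-- The extension functor is a preglider. -/
theorem extFunctor_isPreglider
    (hMo : ∀ (X Y : OFF FR Λ) (h : OFF.le FR Λ X Y),
      Function.Injective (Mo.map (unitHom FR Λ X Y h)))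
    (hMn : ∀ (α β : Λ) (h : (α : Γ) ≤ (β : Γ)),
      Function.Injective (Mn.map (unitHomFF FR Λ α β h)))
    (hτ : ∀ α : Λ, Function.Injective (τ.app (.of α))) :
    ∀ (X Y : OFF FR Λ) (h : OFF.le FR Λ X Y),
      Function.Injective ((extFunctor FR Λ Mo Mn τ).map (unitHom FR Λ X Y h)) := by
  intro X Y h
  cases X with
  | of α =>
    cases Y with
    | of β => exact hMn α β h
    | infty =>
      intro x y hxy
      exact hτ α (hMo (.of α) .infty trivial hxy)
  | infty =>
    cases Y with
    | of β => exact h.elim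
    | infty => exact hMo .infty .infty trivial

end Ext

end Aux

/-- The essential image of `φ : Glid FR ⥤ Prefrag FR` is closed under
subobjects: if `M` is an object of `Glid FR` and `f : N ⟶ φ(M)` is a monomorphism in
`Prefrag FR`, then `N` lies in the essential image of `φ`. -/
theorem statement_14 (FR : RingFiltration Γ R) (Λ : Set Γ)
    (M : Glid FR Λ) (N : Prefrag FR Λ) (f : N ⟶ (phiF FR Λ).obj M) (hf : Mono f) :
    (phiF FR Λ).essImage N := by
  haveI := hf
  let M₀ : Preglid FR Λ := ((Localization.Construction.objEquiv (SigmaClass FR Λ)).symm M)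
  have hM : (QF FR Λ).obj M₀ = M :=
    (Localization.Construction.objEquiv (SigmaClass FR Λ)).right_inv M
  have hEq : (phiF FR Λ).obj M = (jRes FR Λ).obj M₀ := by
    rw [← hM]
    exact Functor.congr_obj (phiF_fac FR Λ) M₀
  let f' : N ⟶ (jRes FR Λ).obj M₀ := f ≫ eqToHom hEq
  haveI : Mono f' := mono_comp _ _
  have hinj : ∀ X, Function.Injective (pfapp FR Λ f' X) :=
    fun X => prefrag_mono_injective FR Λ f' inferInstance X
  let τ : N.obj.obj ⟶ jF FR Λ ⋙ M₀.obj.obj := f'.hom.hom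
  haveI := N.obj.property
  haveI := M₀.obj.property
  let E : Preglid FR Λ :=
    ⟨⟨extFunctor FR Λ M₀.obj.obj N.obj.obj τ,
      (inferInstance : (extFunctor FR Λ M₀.obj.obj N.obj.obj τ).Additive)⟩,
      extFunctor_isPreglider FR Λ M₀.obj.obj N.obj.obj τ M₀.property N.property
        (fun α => hinj (.of α))⟩
  refine ⟨(QF FR Λ).obj E, ⟨?_⟩⟩
  refine eqToIso (Functor.congr_obj (phiF_fac FR Λ) E) ≪≫ ?_
  refine Iso.mk ?_ ?_ ?_ ?_
  · refine ObjectProperty.homMk (ObjectProperty.homMk ?_)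
    exact show (jF FR Λ ⋙ extFunctor FR Λ M₀.obj.obj N.obj.obj τ) ⟶ N.obj.obj from
      { app := fun X => match X with
          | .of α => 𝟙 (N.obj.obj.obj (.of α))
        naturality := by
          rintro ⟨α⟩ ⟨β⟩ g
          show N.obj.obj.map g ≫ 𝟙 _ = 𝟙 _ ≫ N.obj.obj.map g
          rw [Category.comp_id, Category.id_comp] }
  · refine ObjectProperty.homMk (ObjectProperty.homMk ?_)
    exact show N.obj.obj ⟶ (jF FR Λ ⋙ extFunctor FR Λ M₀.obj.obj N.obj.obj τ) from
      { app := fun X => match X with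
          | .of α => 𝟙 (N.obj.obj.obj (.of α))
        naturality := by
          rintro ⟨α⟩ ⟨β⟩ g
          show N.obj.obj.map g ≫ 𝟙 _ = 𝟙 _ ≫ N.obj.obj.map g
          rw [Category.comp_id, Category.id_comp] }
  · exact ObjectProperty.hom_ext _ (ObjectProperty.hom_ext _ (NatTrans.ext (funext fun X => by
      cases X with
      | of α => exact Category.id_comp _)))
  · exact ObjectProperty.hom_ext _ (ObjectProperty.hom_ext _ (NatTrans.ext (funext fun X => by
      cases X with
      | of α => exact Category.id_comp _)))

end Statements

end GliderPaper
end
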